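/- Let s = 2, n ≥ 2, and let P = E^a N E^b N R E^{r+1} N E^c be a valid path from (0,0) to (nr, 2n) with a + b + c < r (where E^a N E^b N is the prefix up to the second N-step and N E^c ends the path). Then the path Q' = E^{a+b+c+1} N R' from (r,2) to (nr,2n), where R' = R + (c+r+1, 1), is valid. -/

import Mathlib

/-- The vector of a step: `true` is an east step `E=(1,0)`, `false` is a north step `N=(0,1)`. -/
def stepVec (b : Bool) : ℤ × ℤ := if b then (1, 0) else (0, 1)

/-- The point of the lattice path reached after the first `i` steps, starting at `start`. -/
def pathPoint (start : ℤ × ℤ) (steps : List Bool) (i : ℕ) : ℤ × ℤ :=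
  start + ((steps.take i).map stepVec).sum

/-- The path with step list `steps` starting at `start` ends at `fin`. -/
def IsPathFrom (start fin : ℤ × ℤ) (steps : List Bool) : Prop :=
  pathPoint start steps steps.length = fin

/-- Validity of a lattice path with respect to the equivalence `v ~ v + ℓ(r,s)`:
whenever the path enters a point `v` with an `E`-step, every later point of the path
in the class of `v` is also entered with an `E`-step. -/
def Valid (r s : ℤ) (start : ℤ × ℤ) (steps : List Bool) : Prop :=
  ∀ i j, i < j → ∀ (hi : i < steps.length) (hj : j < steps.length),
    (∃ ℓ : ℤ, pathPoint start steps (j + 1) - pathPoint start steps (i + 1) = (ℓ * r, ℓ * s)) →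
    steps.get ⟨i, hi⟩ = true → steps.get ⟨j, hj⟩ = true

lemma pathPoint_zero (s : ℤ × ℤ) (l : List Bool) : pathPoint s l 0 = s := by
  simp [pathPoint]

lemma pathPoint_length (s : ℤ × ℤ) (l : List Bool) :
    pathPoint s l l.length = s + (l.map stepVec).sum := by
  simp [pathPoint]

lemma pathPoint_stable (s : ℤ × ℤ) (l : List Bool) {t : ℕ} (h : l.length ≤ t) :
    pathPoint s l t = s + (l.map stepVec).sum := by
  simp [pathPoint, List.take_of_length_le h]

lemma pathPoint_append (s : ℤ × ℤ) (l1 l2 : List Bool) (u : ℕ) :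
    pathPoint s (l1 ++ l2) (l1.length + u) = pathPoint (s + (l1.map stepVec).sum) l2 u := by
  simp [pathPoint, List.take_append, add_assoc]
  rw [List.take_of_length_le (by simp)]

lemma pathPoint_take_left (s : ℤ × ℤ) {l1 : List Bool} (l2 : List Bool) {u : ℕ}
    (h : u ≤ l1.length) : pathPoint s (l1 ++ l2) u = pathPoint s l1 u := by
  simp [pathPoint, List.take_append_of_le_length h]

lemma pathPoint_succ (s : ℤ × ℤ) {l : List Bool} {t : ℕ} (h : t < l.length) :
    pathPoint s l (t + 1) = pathPoint s l t + stepVec l[t] := by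
  unfold pathPoint
  rw [List.take_succ, List.getElem?_eq_getElem h, List.map_append, List.sum_append]
  simp [add_assoc]

lemma pathPoint_start_add (s w : ℤ × ℤ) (l : List Bool) (t : ℕ) :
    pathPoint (s + w) l t = pathPoint s l t + w := by
  unfold pathPoint; exact add_right_comm s w _

lemma sum_stepVec_nonneg (l : List Bool) :
    0 ≤ ((l.map stepVec).sum).1 ∧ 0 ≤ ((l.map stepVec).sum).2 := by
  induction l with
  | nil => simp
  | cons x xs ih =>
    simp only [List.map_cons, List.sum_cons, Prod.fst_add, Prod.snd_add]
    cases x <;> simp [stepVec] <;> omega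

lemma pathPoint_add (s : ℤ × ℤ) (l : List Bool) (t d : ℕ) :
    pathPoint s l (t + d) = pathPoint (pathPoint s l t) (l.drop t) d := by
  simp [pathPoint, List.take_add, add_assoc]

lemma pathPoint_mono (s : ℤ × ℤ) (l : List Bool) {t t' : ℕ} (h : t ≤ t') :
    (pathPoint s l t).1 ≤ (pathPoint s l t').1 ∧ (pathPoint s l t).2 ≤ (pathPoint s l t').2 := by
  obtain ⟨d, rfl⟩ := Nat.exists_eq_add_of_le h
  rw [pathPoint_add]
  generalize pathPoint s l t = p
  unfold pathPoint
  have := sum_stepVec_nonneg (((l.drop t).take d))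
  constructor <;> simp only [Prod.fst_add, Prod.snd_add] <;> omega

lemma pathPoint_y_succ_le (s : ℤ × ℤ) (l : List Bool) (t : ℕ) :
    (pathPoint s l (t + 1)).2 ≤ (pathPoint s l t).2 + 1 := by
  by_cases h : t < l.length
  · rw [pathPoint_succ s h]
    cases hb : l[t] <;> simp [stepVec]
  · rw [pathPoint_stable s l (by omega), pathPoint_stable s l (by omega : l.length ≤ t)]
    omega

lemma pathPoint_ivt_y (s : ℤ × ℤ) (l : List Bool) (T : ℕ) (ρ : ℤ)
    (h0 : (pathPoint s l 0).2 ≤ ρ) (hT : ρ ≤ (pathPoint s l T).2) :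
    ∃ t ≤ T, (pathPoint s l t).2 = ρ := by
  induction T with
  | zero => exact ⟨0, le_refl _, le_antisymm h0 hT⟩
  | succ T ih =>
    by_cases h : ρ ≤ (pathPoint s l T).2
    · obtain ⟨t, ht, h'⟩ := ih h
      exact ⟨t, by omega, h'⟩
    · have := pathPoint_y_succ_le s l T
      exact ⟨T + 1, le_refl _, by omega⟩

lemma pathPoint_row_run (s : ℤ × ℤ) (l : List Bool) {t0 t1 : ℕ} (h01 : t0 ≤ t1)
    (h1 : t1 ≤ l.length) (hy : (pathPoint s l t0).2 = (pathPoint s l t1).2) :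
    ∀ d, d ≤ t1 - t0 → pathPoint s l (t0 + d) = pathPoint s l t0 + ((d : ℤ), 0) := by
  intro d hd
  induction d with
  | zero => simp
  | succ d ih =>
    have hd' : d ≤ t1 - t0 := by omega
    have hlt : t0 + d < l.length := by omega
    have hstep := pathPoint_succ s hlt
    have hyd : (pathPoint s l (t0 + d)).2 = (pathPoint s l t0).2 := by
      rw [ih hd']; simp
    have hy1 : (pathPoint s l (t0 + d + 1)).2 = (pathPoint s l t0).2 := by
      have m1 := (pathPoint_mono s l (show t0 ≤ t0 + d + 1 by omega)).2
      have m2 := (pathPoint_mono s l (show t0 + d + 1 ≤ t1 by omega)).2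
      omega
    have hb : l[t0 + d] = true := by
      by_contra hb
      have : l[t0 + d] = false := by simpa using hb
      rw [this] at hstep
      simp [stepVec] at hstep
      have : (pathPoint s l (t0 + d + 1)).2 = (pathPoint s l (t0 + d)).2 + 1 := by
        rw [hstep]; simp
      omega
    rw [show t0 + (d + 1) = t0 + d + 1 by omega, hstep, hb, ih hd']
    simp [stepVec, add_assoc, Prod.ext_iff]

lemma pathPoint_ehit (s : ℤ × ℤ) (l : List Bool) {t0 t1 : ℕ} (ξ : ℤ) (h01 : t0 ≤ t1)
    (h1 : t1 ≤ l.length) (hy : (pathPoint s l t0).2 = (pathPoint s l t1).2)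
    (hx0 : (pathPoint s l t0).1 < ξ) (hx1 : ξ ≤ (pathPoint s l t1).1) :
    ∃ e, ∃ he : e < l.length, l.get ⟨e, he⟩ = true ∧
      pathPoint s l (e + 1) = (ξ, (pathPoint s l t0).2) := by
  have hrun := pathPoint_row_run s l h01 h1 hy
  have hfull := hrun (t1 - t0) (le_refl _)
  rw [show t0 + (t1 - t0) = t1 by omega] at hfull
  have hx1' : ξ ≤ (pathPoint s l t0).1 + (t1 - t0 : ℕ) := by
    rw [hfull] at hx1; simpa using hx1
  set d : ℕ := (ξ - (pathPoint s l t0).1).toNat with hdd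
  have hd1 : 1 ≤ d := by omega
  have hdle : d ≤ t1 - t0 := by omega
  have he : t0 + d ≤ t1 := by omega
  refine ⟨t0 + (d - 1), by omega, ?_, ?_⟩
  · -- step is true since x increases
    have ha := hrun (d - 1) (by omega)
    have hb := hrun d hdle
    have hlt : t0 + (d - 1) < l.length := by omega
    have hstep := pathPoint_succ s hlt
    rw [show t0 + (d - 1) + 1 = t0 + d by omega] at hstep
    by_contra hbad
    have hfalse : l[t0 + (d-1)] = false := by
      simpa [List.get_eq_getElem] using hbad
    rw [hfalse] at hstep
    rw [ha, hb] at hstep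
    simp [stepVec, Prod.ext_iff] at hstep
  · have hb := hrun d hdle
    rw [show t0 + (d - 1) + 1 = t0 + d by omega, hb]
    have : ((d : ℤ)) = ξ - (pathPoint s l t0).1 := by omega
    rw [this]
    simp [Prod.ext_iff]

lemma pathPoint_row_entry (s : ℤ × ℤ) (l : List Bool) {T : ℕ} (hT : T ≤ l.length) (ρ : ℤ)
    (h0 : (pathPoint s l 0).2 < ρ) (hex : ∃ t ≤ T, (pathPoint s l t).2 = ρ) :
    ∃ t' ≤ T, (pathPoint s l t').2 = ρ ∧ ∃ t'' ≤ T,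
      (pathPoint s l t'').2 = ρ - 1 ∧ (pathPoint s l t').1 = (pathPoint s l t'').1 := by
  classical
  obtain ⟨t, htT, ht⟩ := hex
  have hexP : ∃ t', (pathPoint s l t').2 = ρ := ⟨t, ht⟩
  set t' := Nat.find hexP with ht'd
  have ht' : (pathPoint s l t').2 = ρ := Nat.find_spec hexP
  have ht'le : t' ≤ t := Nat.find_le ht
  have ht'pos : 0 < t' := by
    rcases Nat.eq_zero_or_pos t' with h | h
    · rw [h] at ht'; omega
    · exact h
  have hmin := Nat.find_min hexP (show t' - 1 < t' by omega)
  have hstep := pathPoint_y_succ_le s l (t' - 1)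
  rw [show t' - 1 + 1 = t' by omega] at hstep
  have hmono := (pathPoint_mono s l (show t' - 1 ≤ t' by omega)).2
  have hy'' : (pathPoint s l (t' - 1)).2 = ρ - 1 := by omega
  refine ⟨t', by omega, ht', t' - 1, by omega, hy'', ?_⟩
  have hlt : t' - 1 < l.length := by omega
  have hs := pathPoint_succ s hlt
  rw [show t' - 1 + 1 = t' by omega] at hs
  have hb : l[t' - 1] = false := by
    by_contra hb
    have : l[t' - 1] = true := by simpa using hb
    rw [this] at hs
    simp [stepVec] at hs
    rw [hs] at ht'
    simp at ht'
    omega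
  rw [hb] at hs
  rw [hs]
  simp [stepVec]

lemma sum_replicate_stepVec (q : ℕ) (v : Bool) :
    ((List.replicate q v).map stepVec).sum = if v then ((q : ℤ), 0) else (0, (q : ℤ)) := by
  rw [List.map_replicate, List.sum_replicate]
  cases v <;> simp [stepVec, Prod.ext_iff]

lemma pathPoint_replicate_true_le (s : ℤ × ℤ) {q u : ℕ} (h : u ≤ q) :
    pathPoint s (List.replicate q true) u = s + ((u : ℤ), 0) := by
  unfold pathPoint
  rw [List.take_replicate]
  have : min u q = u := by omega
  rw [this, sum_replicate_stepVec]
  simp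

lemma getElem_append_off (l1 l2 : List Bool) (u : ℕ) (hu : u < l2.length) :
    (l1 ++ l2)[l1.length + u]'(by simp; omega) = l2[u]'hu := by
  rw [List.getElem_append_right (by omega)]
  congr 1
  omega

lemma pathPoint_append_repl (s : ℤ × ℤ) (q : ℕ) (l2 : List Bool) (u : ℕ) :
    pathPoint s (List.replicate q true ++ l2) (q + u) = pathPoint (s + ((q : ℤ), 0)) l2 u := by
  have := pathPoint_append s (List.replicate q true) l2 u
  rw [List.length_replicate, sum_replicate_stepVec] at this
  simpa using this

lemma pathPoint_append_false (s : ℤ × ℤ) (l2 : List Bool) (u : ℕ) :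
    pathPoint s ([false] ++ l2) (1 + u) = pathPoint (s + (0, 1)) l2 u := by
  have := pathPoint_append s [false] l2 u
  simpa [stepVec] using this

lemma pathPoint_one_false (s : ℤ × ℤ) (l : List Bool) :
    pathPoint s (false :: l) 1 = s + (0, 1) := by
  simp [pathPoint, stepVec]

lemma get_eq_of_succ (s : ℤ × ℤ) {l : List Bool} {t : ℕ} (h : t < l.length) {v : Bool}
    (hv : pathPoint s l (t + 1) = pathPoint s l t + stepVec v) : l.get ⟨t, h⟩ = v := by
  have h2 := pathPoint_succ s h
  rw [h2] at hv
  have h3 : stepVec (l[t]) = stepVec v := add_left_cancel hv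
  cases v <;> cases hb : l[t] <;> simp_all [stepVec, List.get_eq_getElem, Prod.ext_iff]

set_option maxHeartbeats 2000000 in
/-- case (2) of the bijection. If `P = E^a N E^b N R E^{r+1} N E^c` is a valid
path from `(0,0)` to `(nr,2n)` with `a + b + c < r`, then
`Q' = E^{a+b+c+1} N R'` (with `R' = R + (c+r+1,1)`), i.e. the path with steps
`E^{a+b+c+1} N R` started at `(r,2)`, is a valid path from `(r,2)` to `(nr,2n)`. -/
theorem case_two_image_valid (r n : ℕ) (hr : 0 < r) (hn : 2 ≤ n)
    (a b c : ℕ) (R : List Bool) (steps : List Bool)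
    (hform : steps = List.replicate a true ++ [false] ++ List.replicate b true ++ [false] ++
      R ++ List.replicate (r + 1) true ++ [false] ++ List.replicate c true)
    (habc : a + b + c < r)
    (hpath : IsPathFrom (0, 0) ((n * r : ℤ), (2 * n : ℤ)) steps)
    (hvalid : Valid r 2 (0, 0) steps) :
    Valid r 2 ((r : ℤ), 2) (List.replicate (a + b + c + 1) true ++ [false] ++ R) ∧
    IsPathFrom ((r : ℤ), 2) ((n * r : ℤ), (2 * n : ℤ))
      (List.replicate (a + b + c + 1) true ++ [false] ++ R) := by
  classical
  subst hform
  set m := a + b + c + 1 with hm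
  set tail3 : List Bool := List.replicate (r+1) true ++ ([false] ++ List.replicate c true)
    with htail3
  set rest4 : List Bool := R ++ tail3 with hrest4
  have hSe : (List.replicate a true ++ [false] ++ List.replicate b true ++ [false] ++
      R ++ List.replicate (r + 1) true ++ [false] ++ List.replicate c true)
      = List.replicate a true ++ ([false] ++ (List.replicate b true ++ ([false] ++ rest4))) := by
    simp [hrest4, htail3, List.append_assoc]
  rw [hSe] at hvalid hpath
  set S : List Bool := List.replicate a true ++ ([false] ++ (List.replicate b true ++
    ([false] ++ rest4))) with hS
  set QL : List Bool := List.replicate m true ++ [false] ++ R with hQL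
  have hQL' : QL = List.replicate m true ++ ([false] ++ R) := by
    rw [hQL, List.append_assoc]
  have hSlen : S.length = a + b + 2 + R.length + (r + 2) + c := by
    simp [hS, hrest4, htail3]; omega
  have hQlen : QL.length = m + 1 + R.length := by
    simp [hQL]; omega
  -- pointwise values on P
  have keyf : ∀ u : ℕ, pathPoint (0,0) S (a + (1 + (b + (1 + u))))
      = pathPoint (((a : ℤ) + b, 2)) rest4 u := by
    intro u
    rw [hS, pathPoint_append_repl, pathPoint_append_false, pathPoint_append_repl,
      pathPoint_append_false]
    congr 1
    simp [Prod.ext_iff]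
  have hfR : ∀ u, u ≤ R.length →
      pathPoint (0,0) S (a+b+2+u) = pathPoint (((a:ℤ)+b, 2)) R u := by
    intro u hu
    rw [show a+b+2+u = a + (1 + (b + (1 + u))) by omega, keyf u, hrest4]
    exact pathPoint_take_left _ _ hu
  have hfERbase : ∀ u, pathPoint (0,0) S (a+b+2+(R.length+u))
      = pathPoint ((((a:ℤ)+b, 2)) + (R.map stepVec).sum) tail3 u := by
    intro u
    rw [show a+b+2+(R.length+u) = a + (1 + (b + (1 + (R.length + u)))) by omega, keyf, hrest4]
    exact pathPoint_append _ _ _ _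
  have h0ab : pathPoint (0,0) S (a+b+2) = ((a:ℤ)+b, 2) := by
    have := hfR 0 (by omega)
    rw [pathPoint_zero] at this
    simpa using this
  -- endpoint equations
  have hsum : ((0:ℤ),(0:ℤ)) + (List.map stepVec S).sum = ((n*r:ℤ), (2*n:ℤ)) := by
    rw [← pathPoint_length]; exact hpath
  rw [hS, hrest4, htail3] at hsum
  simp [List.map_append, List.sum_append, sum_replicate_stepVec, stepVec,
    Prod.ext_iff] at hsum
  obtain ⟨hEx, hEy⟩ := hsum
  have hERx : ((R.map stepVec).sum).1 = (n:ℤ)*r - r - 1 - a - b - c := by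
    push_cast at hEx ⊢; linarith
  have hERy : ((R.map stepVec).sum).2 = 2*(n:ℤ) - 3 := by
    push_cast at hEy ⊢; linarith
  -- pointwise values on Q
  have htrans : ∀ u, pathPoint ((r:ℤ), 2) QL (m + (1 + u))
      = pathPoint (((a:ℤ)+b, 2)) R u + ((r:ℤ)+c+1, 1) := by
    intro u
    have h1 : pathPoint ((r:ℤ), 2) QL (m + (1 + u))
        = pathPoint (((r:ℤ),2) + ((m:ℤ),0) + (0,1)) R u := by
      rw [hQL', pathPoint_append_repl, pathPoint_append_false]
    rw [h1]
    have h2 : (((r:ℤ),(2:ℤ)) + ((m:ℤ),0) + (0,1)) = (((a:ℤ)+b, 2)) + ((r:ℤ)+c+1, 1) := by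
      simp [Prod.ext_iff, hm]; push_cast; ring
    rw [h2, pathPoint_start_add]
  have hgpre : ∀ u, u ≤ m → pathPoint ((r:ℤ),2) QL u = ((r:ℤ)+u, 2) := by
    intro u hu
    rw [hQL', pathPoint_take_left _ _ (by simpa using hu),
      pathPoint_replicate_true_le _ hu]
    simp [Prod.ext_iff]
  -- get values
  have hSgetR : ∀ t (ht : t < R.length) (hh : a+b+2+t < S.length),
      S.get ⟨a+b+2+t, hh⟩ = R[t] := by
    intro t ht hh
    apply get_eq_of_succ
    rw [show a+b+2+t+1 = a+b+2+(t+1) by omega, hfR (t+1) (by omega), hfR t (by omega)]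
    exact pathPoint_succ _ ht
  have hQgetR : ∀ t (ht : t < R.length) (hh : m+1+t < QL.length),
      QL.get ⟨m+1+t, hh⟩ = R[t] := by
    intro t ht hh
    apply get_eq_of_succ
    rw [show m+1+t+1 = m+(1+(t+1)) by omega, show m+1+t = m+(1+t) by omega, htrans, htrans,
      pathPoint_succ _ ht, add_right_comm]
  have hQget1 : ∀ i (hi' : i < m) (hh : i < QL.length), QL.get ⟨i, hh⟩ = true := by
    intro i hi' hh
    apply get_eq_of_succ
    rw [hgpre i (by omega), hgpre (i+1) (by omega)]
    simp [stepVec, Prod.ext_iff]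
    push_cast; ring
  have hQgetm : ∀ (hh : m < QL.length), QL.get ⟨m, hh⟩ = false := by
    intro hh
    apply get_eq_of_succ
    rw [show m+1 = m + (1+0) by omega, htrans 0, pathPoint_zero, hgpre m (le_refl m)]
    rw [Prod.ext_iff]
    constructor <;> simp [stepVec, hm] <;> push_cast <;> ring
  have hfEb : ∀ u, u ≤ b → pathPoint (0,0) S (a + (1 + u)) = ((a:ℤ) + u, 1) := by
    intro u hu
    rw [hS, pathPoint_append_repl, pathPoint_append_false,
      pathPoint_take_left _ _ (by simpa using hu), pathPoint_replicate_true_le _ hu]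
    simp [Prod.ext_iff]
  have hSgetEb : ∀ w (hw : w < b) (hh : a+1+w < S.length), S.get ⟨a+1+w, hh⟩ = true := by
    intro w hw hh
    apply get_eq_of_succ
    rw [show a+1+w+1 = a+(1+(w+1)) by omega, show a+1+w = a+(1+w) by omega,
      hfEb (w+1) (by omega), hfEb w (by omega)]
    simp [stepVec, Prod.ext_iff]
    push_cast; ring
  -- the final N of P
  have hfι : pathPoint (0,0) S (a+b+2+R.length+(r+1))
      = ((((a:ℤ)+b,2) + (R.map stepVec).sum)) + (((r:ℤ)+1), 0) := by
    rw [show a+b+2+R.length+(r+1) = a+b+2+(R.length+(r+1)) by omega, hfERbase, htail3,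
      pathPoint_take_left _ _ (by simp), pathPoint_replicate_true_le _ (le_refl _)]
    push_cast; ring_nf
  have hfι1raw : pathPoint (0,0) S (a+b+2+R.length+(r+1)+1)
      = ((((a:ℤ)+b,2) + (R.map stepVec).sum)) + (((r:ℤ)+1), 0) + (0,1) := by
    rw [show a+b+2+R.length+(r+1)+1 = a+b+2+(R.length+((r+1)+1)) by omega, hfERbase, htail3,
      pathPoint_append_repl]
    have : pathPoint ((((a:ℤ)+b,2) + (R.map stepVec).sum) + ((((r:ℕ)+1:ℕ):ℤ), 0))
        ([false] ++ List.replicate c true) 1 = (((a:ℤ)+b,2) + (R.map stepVec).sum)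
        + ((((r:ℕ)+1:ℕ):ℤ), 0) + (0,1) := by
      rw [List.singleton_append, pathPoint_one_false]
    rw [this]
    push_cast; ring_nf
  have hfι1 : pathPoint (0,0) S (a+b+2+R.length+(r+1)+1) = ((n:ℤ)*r - c, 2*(n:ℤ)) := by
    rw [hfι1raw]
    simp [Prod.ext_iff, Prod.fst_add, Prod.snd_add]
    constructor
    · rw [hERx]; push_cast; ring
    · rw [hERy]; push_cast; ring
  have hιlt : a+b+2+R.length+(r+1) < S.length := by omega
  have hSgetι : S.get ⟨a+b+2+R.length+(r+1), hιlt⟩ = false := by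
    apply get_eq_of_succ
    rw [hfι1raw, hfι]
    simp [stepVec]
  -- straddle helper
  have straddle : ∀ (t0 t1 : ℕ) (ξ ρ : ℤ), t0 ≤ S.length → t1 ≤ S.length →
      (pathPoint (0,0) S t0).2 = ρ → (pathPoint (0,0) S t1).2 = ρ →
      (pathPoint (0,0) S t0).1 < ξ → ξ ≤ (pathPoint (0,0) S t1).1 →
      ∃ e, ∃ he : e < S.length, S.get ⟨e, he⟩ = true ∧
        pathPoint (0,0) S (e+1) = (ξ, ρ) := by
    intro t0 t1 ξ ρ h0 h1 hy0 hy1 hx0 hx1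
    rcases le_total t0 t1 with h | h
    · obtain ⟨e, he, hT, hpt⟩ := pathPoint_ehit (0,0) S ξ h h1 (hy0.trans hy1.symm) hx0 hx1
      exact ⟨e, he, hT, by rw [hpt, hy0]⟩
    · exfalso
      have := (pathPoint_mono (0,0) S h).1
      linarith
  -- V-final
  have Vfinal : ∀ e (he : e < S.length), S.get ⟨e, he⟩ = true → ∀ k : ℤ, 1 ≤ k →
      pathPoint (0,0) S (e+1) = ((n:ℤ)*r - c - k*r, 2*n - 2*k) → False := by
    intro e he hE k hk hpt
    have helt : e < a+b+2+R.length+(r+1) := by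
      by_contra hcon
      have hmo := (pathPoint_mono (0,0) S
        (show a+b+2+R.length+(r+1)+1 ≤ e+1 by omega)).2
      rw [hpt, hfι1] at hmo
      simp at hmo
      linarith
    have hres := hvalid e (a+b+2+R.length+(r+1)) helt he hιlt
      ⟨k, by
        rw [hfι1, hpt, Prod.ext_iff]
        constructor <;> simp <;> ring⟩ hE
    rw [hSgetι] at hres
    exact Bool.false_ne_true hres
  refine ⟨?_, ?_⟩
  · -- Validity of Q'
    intro i j hij hi hj hcl hiE
    obtain ⟨ℓ, hℓ⟩ := hcl
    by_cases hjm : j < m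
    · exact hQget1 j hjm hj
    by_cases hjm2 : j = m
    · exfalso
      subst hjm2
      have e1 := htrans 0
      rw [pathPoint_zero] at e1
      norm_num at e1
      rw [e1, hgpre (i+1) (by omega)] at hℓ
      simp [Prod.ext_iff] at hℓ
      omega
    -- j = m + 1 + t'
    obtain ⟨t', rfl⟩ : ∃ t', j = m+1+t' := ⟨j - (m+1), by omega⟩
    have ht' : t' < R.length := by omega
    by_cases him2 : i = m
    · exfalso
      subst him2
      rw [hQgetm hi] at hiE
      exact Bool.false_ne_true hiE
    by_cases him : i < m
    · -- hard case
      rw [hQgetR t' ht' hj]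
      by_contra hN
      have hN' : R[t'] = false := by simpa using hN
      -- value of P at the bad N
      have hfj : pathPoint (0,0) S (a+b+2+(t'+1)) = ((i:ℤ) - c + ℓ*r, ℓ*2 + 1) := by
        rw [hfR _ (by omega)]
        rw [show m+1+t'+1 = m+(1+(t'+1)) by omega, htrans (t'+1),
          hgpre (i+1) (by omega)] at hℓ
        simp [Prod.ext_iff] at hℓ ⊢
        push_cast at hℓ ⊢
        constructor <;> linarith [hℓ.1, hℓ.2]
      have hjPlt : a+b+2+t' < S.length := by omega
      have hSjP : S.get ⟨a+b+2+t', hjPlt⟩ = false := by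
        rw [hSgetR t' ht']; exact hN'
      have hfjP : pathPoint (0,0) S (a+b+2+t') = ((i:ℤ) - c + ℓ*r, ℓ*2) := by
        have hsucc := pathPoint_succ (0,0) hjPlt
        rw [List.get_eq_getElem] at hSjP
        rw [hSjP] at hsucc
        rw [show a+b+2+t'+1 = a+b+2+(t'+1) by omega, hfj] at hsucc
        simp [stepVec, Prod.ext_iff] at hsucc ⊢
        constructor <;> linarith [hsucc.1, hsucc.2]
      have hl1 : 1 ≤ ℓ := by
        have h2 := (pathPoint_mono (0,0) S (show a+b+2 ≤ a+b+2+t' by omega)).2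
        rw [hfjP, h0ab] at h2
        simp at h2
        linarith
      have hl2 : ℓ ≤ (n:ℤ) - 2 := by
        have hmo := (pathPoint_mono (0,0) S
          (show a+b+2+(t'+1) ≤ a+b+2+R.length by omega)).1
        have hRe : pathPoint (0,0) S (a+b+2+R.length)
            = ((a:ℤ)+b,2) + (R.map stepVec).sum := by
          have := hfR R.length (le_refl _)
          rw [pathPoint_length] at this
          exact this
        rw [hfj, hRe] at hmo
        simp [Prod.fst_add] at hmo
        rw [hERx] at hmo
        have hi0 : (0:ℤ) ≤ (i:ℤ) := by positivity
        have hr0 : (0:ℤ) < (r:ℤ) := by exact_mod_cast hr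
        have hlt : ℓ * (r:ℤ) < ((n:ℤ)-1) * r := by nlinarith
        have := lt_of_mul_lt_mul_right hlt (le_of_lt hr0)
        omega
      -- V-p
      have Vp : ∀ e (he : e < S.length), S.get ⟨e, he⟩ = true → ∀ k : ℤ, 0 ≤ k → k < ℓ →
          pathPoint (0,0) S (e+1) = ((i:ℤ) - c + k*r, 2*k + 1) → False := by
        intro e he hE k hk0 hkl hpt
        have helt : e < a+b+2+t' := by
          by_contra hcon
          have hmo := (pathPoint_mono (0,0) S (show a+b+2+(t'+1) ≤ e+1 by omega)).2
          rw [hfj, hpt] at hmo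
          simp at hmo
          linarith
        have hres := hvalid e (a+b+2+t') helt he hjPlt
          ⟨ℓ - k, by
            rw [show a+b+2+t'+1 = a+b+2+(t'+1) by omega, hfj, hpt]
            simp [Prod.ext_iff]
            constructor <;> ring⟩ hE
        rw [hSjP] at hres
        exact Bool.false_ne_true hres
      by_cases hiA : c + a < i
      · -- case A: use the E-step of the E^b block at x-coordinate i - c
        have hwlt : i - c - (a+1) < b := by omega
        refine Vp (a+1+(i-c-(a+1))) (by omega) (hSgetEb _ hwlt _) 0 (le_refl 0) hl1 ?_
        rw [show a+1+(i-c-(a+1))+1 = a + (1 + ((i-c-(a+1))+1)) by omega,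
          hfEb ((i-c-(a+1))+1) (by omega), Prod.ext_iff]
        constructor <;> simp <;> omega
      · -- case B
        push_neg at hiA
        have hiA' : (i:ℤ) ≤ c + a := by exact_mod_cast hiA
        have habc' : (a:ℤ) + b + c < r := by exact_mod_cast habc
        have H : ∀ k : ℕ, 1 ≤ k → (k:ℤ) ≤ ℓ → ∀ t, t ≤ S.length →
            (pathPoint (0,0) S t).2 = 2*(k:ℤ) → (pathPoint (0,0) S t).1 < (k:ℤ)*r - c := by
          intro k
          induction k with
          | zero => intro h; exact absurd h (by omega)
          | succ k ih =>
            intro _ hkl t htS hty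
            push_cast at hkl hty
            by_contra hge
            push_neg at hge
            push_cast at hge
            rcases Nat.eq_zero_or_pos k with rfl | hk1
            · -- base case: row 2
              have hty2 : (pathPoint (0,0) S t).2 = 2 := by omega
              have hge2 : ((r:ℤ))-c ≤ (pathPoint (0,0) S t).1 := by
                simp only [Nat.cast_zero] at hge; linarith
              obtain ⟨e, he, hget, hpt⟩ := straddle (a+b+2) t ((r:ℤ)-c) 2 (by omega) htS
                (by rw [h0ab]) hty2 (by rw [h0ab]; simp; omega) hge2
              refine Vfinal e he hget ((n:ℤ)-1) (by omega) ?_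
              rw [hpt, Prod.ext_iff]
              constructor <;> simp <;> ring
            · -- inductive step
              have hSk : ∀ u, u ≤ S.length → (pathPoint (0,0) S u).2 = 2*(k:ℤ)+1 →
                  (pathPoint (0,0) S u).1 < (i:ℤ) - c + (k:ℤ)*r := by
                intro u huS huy
                by_contra hgeu
                push_neg at hgeu
                obtain ⟨u1, hu1S, hyu1, u2, hu2S, hyu2, hxu12⟩ :=
                  pathPoint_row_entry (0,0) S (le_refl S.length) (2*(k:ℤ)+1)
                    (by rw [pathPoint_zero]; simp) ⟨u, huS, huy⟩
                have hbnd := ih hk1 (by linarith) u2 hu2S (by omega)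
                have hi0 : (0:ℤ) ≤ (i:ℤ) := by positivity
                have hx1lt : (pathPoint (0,0) S u1).1 < (i:ℤ) - c + (k:ℤ)*r := by
                  rw [hxu12]; linarith
                obtain ⟨e, he, hget, hpt⟩ := straddle u1 u ((i:ℤ) - c + (k:ℤ)*r) (2*(k:ℤ)+1)
                  hu1S huS hyu1 huy hx1lt hgeu
                exact Vp e he hget (k:ℤ) (by positivity) (by linarith) hpt
              obtain ⟨u1, hu1S, hyu1, u2, hu2S, hyu2, hxu12⟩ :=
                pathPoint_row_entry (0,0) S (le_refl S.length) (2*((k:ℤ)+1))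
                  (by rw [pathPoint_zero]; show (0:ℤ) < 2*((k:ℤ)+1); positivity)
                  ⟨t, htS, by rw [hty]⟩
              have hxu2 := hSk u2 hu2S (by omega)
              have hexp : ((k:ℤ)+1)*r = (k:ℤ)*r + r := by ring
              have hx1lt : (pathPoint (0,0) S u1).1 < ((k:ℤ)+1)*r - c := by
                rw [hxu12]; linarith
              obtain ⟨e, he, hget, hpt⟩ := straddle u1 t (((k:ℤ)+1)*r - c) (2*((k:ℤ)+1))
                hu1S htS hyu1 hty hx1lt (by linarith)
              refine Vfinal e he hget ((n:ℤ)-((k:ℤ)+1)) (by linarith) ?_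
              rw [hpt, Prod.ext_iff]
              constructor <;> simp <;> ring
        have hℓt : ((ℓ.toNat : ℤ)) = ℓ := Int.toNat_of_nonneg (by linarith)
        have hfinal := H ℓ.toNat (by omega) (by omega) (a+b+2+t') (by omega)
          (by rw [hfjP]; simp; omega)
        rw [hfjP] at hfinal
        rw [hℓt] at hfinal
        have hi0 : (0:ℤ) ≤ (i:ℤ) := by positivity
        simp at hfinal
        linarith
    · -- i in R part
      obtain ⟨t, rfl⟩ : ∃ t, i = m+1+t := ⟨i - (m+1), by omega⟩
      have ht : t < R.length := by omega
      have hclS : pathPoint (0,0) S (a+b+2+t'+1) - pathPoint (0,0) S (a+b+2+t+1)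
          = (ℓ * ↑r, ℓ * 2) := by
        rw [show a+b+2+t'+1 = a+b+2+(t'+1) by omega, show a+b+2+t+1 = a+b+2+(t+1) by omega,
          hfR _ (by omega), hfR _ (by omega)]
        rw [show m+1+t'+1 = m+(1+(t'+1)) by omega, show m+1+t+1 = m+(1+(t+1)) by omega,
          htrans, htrans] at hℓ
        simpa using hℓ
      have hres := hvalid (a+b+2+t) (a+b+2+t') (by omega) (by omega) (by omega)
        ⟨ℓ, hclS⟩ (by
          rw [hSgetR t ht]
          rw [hQgetR t ht hi] at hiE
          exact hiE)
      rw [hSgetR t' ht'] at hres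
      rw [hQgetR t' ht' hj]
      exact hres
  · -- IsPathFrom
    show pathPoint ((r:ℤ),2) QL QL.length = ((n*r:ℤ), (2*n:ℤ))
    rw [hQlen, show m+1+R.length = m+(1+R.length) by omega, htrans, pathPoint_length]
    simp [Prod.ext_iff, Prod.fst_add, Prod.snd_add]
    constructor
    · rw [hERx]; push_cast [hm]; ring
    · rw [hERy]; push_cast; ring
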